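/- Let φ ∈ C¹([0,∞)) be a convex Φ-function whose derivative φ' satisfies (Inc)_{p−1} and (Dec)_{q−1} for some 1 < p ≤ q. Then for every κ ∈ (0,∞) and all vectors x, y ∈ ℝ^N, φ(|x−y|) ≤ C ( κ [φ(|x|) + φ(|y|)] + κ^{-1} (φ'(|x|+|y|)/(|x|+|y|)) |x−y|² ), where C depends only on p and q. -/

import Mathlib

open Set
set_option maxHeartbeats 1000000

lemma tangent_aux (φ ψ : ℝ → ℝ) (hd : ∀ t : ℝ, HasDerivAt φ (ψ t) t)
    (hc : ConvexOn ℝ (Ici 0) φ) {u v : ℝ} (hu : 0 ≤ u) (hv : 0 ≤ v) :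
    φ u + ψ u * (v - u) ≤ φ v := by
  rcases lt_trichotomy u v with h | h | h
  · have h1 := hc.le_slope_of_hasDerivAt (mem_Ici.2 hu) (mem_Ici.2 hv) h (hd u)
    rw [slope_def_field, le_div_iff₀ (by linarith)] at h1
    linarith
  · simp [h]
  · have h1 := hc.slope_le_of_hasDerivAt (mem_Ici.2 hv) (mem_Ici.2 hu) h (hd u)
    rw [slope_def_field, div_le_iff₀ (by linarith)] at h1
    linarith


lemma stmt5_real (q : ℝ) (hq1 : 1 < q) (φ φ' : ℝ → ℝ)
    (hd : ∀ t : ℝ, HasDerivAt φ (φ' t) t)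
    (h0 : φ 0 = 0)
    (hc : ConvexOn ℝ (Set.Ici 0) φ)
    (hnn : ∀ t : ℝ, 0 ≤ t → 0 ≤ φ t)
    (hdec : ∀ s t : ℝ, 0 < s → s ≤ t → φ' t / t ^ (q - 1) ≤ φ' s / s ^ (q - 1))
    (κ : ℝ) (hκ : 0 < κ) (a b t : ℝ)
    (ha0 : 0 ≤ a) (hb0 : 0 ≤ b) (ht0 : 0 ≤ t) (hts : t ≤ a + b) :
    φ t ≤ (8:ℝ)^q * (κ * (φ a + φ b) + κ⁻¹ * (φ' (a + b) / (a + b)) * t ^ 2) := by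
  -- rpow facts
  have h2q : (0:ℝ) < (2:ℝ) ^ (q-1) := Real.rpow_pos_of_pos (by norm_num) _
  have e2 : (2:ℝ) ^ (q-1) * 2 = (2:ℝ) ^ q := by
    have h := Real.rpow_add (show (0:ℝ) < 2 by norm_num) (q-1) 1
    rw [Real.rpow_one] at h
    rw [← h]; ring_nf
  have e4 : (4:ℝ) ^ q = (2:ℝ) ^ q * (2:ℝ) ^ q := by
    rw [show (4:ℝ) = 2 * 2 by norm_num, Real.mul_rpow (by norm_num) (by norm_num)]
  have e8 : (8:ℝ) ^ q = (2:ℝ) ^ q * (4:ℝ) ^ q := by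
    rw [show (8:ℝ) = 2 * 4 by norm_num, Real.mul_rpow (by norm_num) (by norm_num)]
  have h4q2 : (2:ℝ) ≤ (4:ℝ) ^ q := by
    calc (2:ℝ) ≤ (4:ℝ)^(1:ℝ) := by rw [Real.rpow_one]; norm_num
    _ ≤ _ := Real.rpow_le_rpow_of_exponent_le (by norm_num) (le_of_lt hq1)
  -- tangent and its consequences
  have tan : ∀ u v : ℝ, 0 ≤ u → 0 ≤ v → φ u + φ' u * (v - u) ≤ φ v :=
    fun u v hu hv => tangent_aux φ φ' hd hc hu hv
  -- f1 : φ u ≤ u * φ' u for u ≥ 0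
  have f1 : ∀ u : ℝ, 0 ≤ u → φ u ≤ u * φ' u := by
    intro u hu
    have := tan u 0 hu le_rfl
    rw [h0] at this; nlinarith
  -- f2 : φ' nonneg on positives
  have f2 : ∀ u : ℝ, 0 < u → 0 ≤ φ' u := by
    intro u hu
    have := f1 u hu.le
    nlinarith [hnn u hu.le]
  -- f3 : φ' monotone on nonnegatives
  have f3 : ∀ u v : ℝ, 0 ≤ u → u ≤ v → φ' u ≤ φ' v := by
    intro u v hu huv
    have hv : 0 ≤ v := le_trans hu huv
    rcases eq_or_lt_of_le huv with rfl | h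
    · exact le_rfl
    have t1 := tan u v hu hv
    have t2 := tan v u hv hu
    nlinarith
  -- f4 : s * φ' s ≤ 2^q * φ s for s > 0
  have f4 : ∀ s : ℝ, 0 < s → s * φ' s ≤ (2:ℝ)^q * φ s := by
    intro s hs
    have hhalf : (0:ℝ) < s / 2 := by linarith
    have hd1 := hdec (s/2) s hhalf (by linarith)
    have hsp : (0:ℝ) < s ^ (q-1) := Real.rpow_pos_of_pos hs _
    have hsp2 : (0:ℝ) < (s/2) ^ (q-1) := Real.rpow_pos_of_pos hhalf _
    have hsplit : s ^ (q-1) = (2:ℝ)^(q-1) * (s/2)^(q-1) := by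
      rw [← Real.mul_rpow (by norm_num) (by linarith)]
      ring_nf
    have key : φ' s ≤ (2:ℝ)^(q-1) * φ' (s/2) := by
      rw [div_le_div_iff₀ hsp hsp2] at hd1
      rw [hsplit] at hd1
      nlinarith
    have t1 := tan (s/2) s hhalf.le hs.le
    have hφh := hnn (s/2) hhalf.le
    have t1' : φ' (s/2) * (s/2) ≤ φ s := by
      have e : s - s/2 = s/2 := by ring
      rw [e] at t1; linarith
    calc s * φ' s ≤ s * ((2:ℝ)^(q-1) * φ' (s/2)) := mul_le_mul_of_nonneg_left key hs.le
      _ = (2:ℝ)^(q-1) * 2 * (φ' (s/2) * (s/2)) := by ring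
      _ ≤ (2:ℝ)^(q-1) * 2 * φ s :=
          mul_le_mul_of_nonneg_left t1' (by positivity)
      _ = (2:ℝ)^q * φ s := by rw [e2]
  -- f5 : φ monotone on nonnegatives
  have f5 : ∀ u v : ℝ, 0 ≤ u → u ≤ v → φ u ≤ φ v := by
    intro u v hu huv
    rcases eq_or_lt_of_le hu with rfl | hu'
    · rw [h0] at *; exact hnn v (le_trans hu huv)
    have := tan u v hu (le_trans hu huv)
    nlinarith [f2 u hu']
  rcases eq_or_lt_of_le (by linarith : (0:ℝ) ≤ a + b) with hs0 | hs
  · -- degenerate case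
    have hA : a = 0 := by linarith
    have hB : b = 0 := by linarith
    have hT : t = 0 := le_antisymm (by linarith) ht0
    rw [hA, hB, hT, h0]
    simp
  -- main case : s := a + b > 0
  set s := a + b with hsdef
  -- doubling:  φ s ≤ 4^q * (φ a + φ b)
  have f6 : φ s ≤ (4:ℝ)^q * (φ a + φ b) := by
    set m := max a b with hm
    have hm0 : 0 < m := by
      rcases le_total a b with h | h
      · rw [hm, max_eq_right h]; nlinarith
      · rw [hm, max_eq_left h]; nlinarith
    have hsm : s ≤ 2 * m := by
      rcases le_total a b with h | h
      · rw [hm, max_eq_right h]; simp [hsdef]; linarith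
      · rw [hm, max_eq_left h]; simp [hsdef]; linarith
    have step1 : φ s ≤ φ (2*m) := f5 s (2*m) (le_of_lt hs) hsm
    have step2 : φ (2*m) ≤ φ m + m * φ' (2*m) := by
      have := tan (2*m) m (by linarith) hm0.le
      nlinarith
    have step3 : φ' (2*m) ≤ (2:ℝ)^(q-1) * φ' m := by
      have hd1 := hdec m (2*m) hm0 (by linarith)
      have hmp : (0:ℝ) < m ^ (q-1) := Real.rpow_pos_of_pos hm0 _
      have hmp2 : (0:ℝ) < (2*m) ^ (q-1) := Real.rpow_pos_of_pos (by linarith) _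
      have hsplit : (2*m) ^ (q-1) = (2:ℝ)^(q-1) * m^(q-1) :=
        Real.mul_rpow (by norm_num) hm0.le
      rw [div_le_div_iff₀ hmp2 hmp, hsplit] at hd1
      nlinarith
    have step4 : m * φ' m ≤ (2:ℝ)^q * φ m := f4 m hm0
    have hφm : φ m ≤ φ a + φ b := by
      rcases le_total a b with h | h
      · rw [hm, max_eq_right h]; linarith [hnn a ha0]
      · rw [hm, max_eq_left h]; linarith [hnn b hb0]
    have hφm0 : 0 ≤ φ m := hnn m hm0.le
    -- φ s ≤ φ m + 2^(q-1)*2^q φ m = (1 + 4^q/2) φ m ≤ 4^q φ m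
    have c3 : m * φ' (2*m) ≤ m * ((2:ℝ)^(q-1) * φ' m) :=
      mul_le_mul_of_nonneg_left step3 hm0.le
    have c4 : (2:ℝ)^(q-1) * (m * φ' m) ≤ (2:ℝ)^(q-1) * ((2:ℝ)^q * φ m) :=
      mul_le_mul_of_nonneg_left step4 h2q.le
    have hcomb : φ s ≤ (1 + (2:ℝ)^(q-1) * (2:ℝ)^q) * φ m := by
      nlinarith [step1, step2, c3, c4]
    have e24 : (2:ℝ)^(q-1) * (2:ℝ)^q = (4:ℝ)^q / 2 := by
      rw [e4, ← e2]; ring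
    have hcoef : (1 + (2:ℝ)^(q-1) * (2:ℝ)^q) ≤ (4:ℝ)^q := by
      rw [e24]; linarith
    have c5 : (1 + (2:ℝ)^(q-1) * (2:ℝ)^q) * φ m ≤ (4:ℝ)^q * φ m :=
      mul_le_mul_of_nonneg_right hcoef hφm0
    have c6 : (4:ℝ)^q * φ m ≤ (4:ℝ)^q * (φ a + φ b) :=
      mul_le_mul_of_nonneg_left hφm (by positivity)
    linarith
  -- key quadratic bound
  set A := φ a + φ b with hA
  set B := φ' s / s * t^2 with hB
  have hA0 : 0 ≤ A := add_nonneg (hnn a ha0) (hnn b hb0)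
  have hφ's : 0 ≤ φ' s := f2 s hs
  have hB0 : 0 ≤ B := mul_nonneg (div_nonneg hφ's hs.le) (sq_nonneg t)
  have hkey : (φ t)^2 ≤ (8:ℝ)^q * A * B := by
    have l1 : φ t ≤ t * φ' t := f1 t ht0
    have l2 : φ' t ≤ φ' s := f3 t s ht0 hts
    have l3 : s * φ' s ≤ (2:ℝ)^q * φ s := f4 s hs
    have l2' : t * φ' t ≤ t * φ' s := mul_le_mul_of_nonneg_left l2 ht0
    have l4 : (φ t)^2 ≤ (t * φ' s)^2 :=
      pow_le_pow_left₀ (hnn t ht0) (le_trans l1 l2') 2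
    have hsne : s ≠ 0 := ne_of_gt hs
    have l5 : (t * φ' s)^2 = B * (s * φ' s) := by
      rw [hB]; field_simp
    have l6 : B * (s * φ' s) ≤ B * ((2:ℝ)^q * ((4:ℝ)^q * A)) := by
      apply mul_le_mul_of_nonneg_left _ hB0
      calc s * φ' s ≤ (2:ℝ)^q * φ s := l3
        _ ≤ (2:ℝ)^q * ((4:ℝ)^q * A) := by
            apply mul_le_mul_of_nonneg_left f6 (by positivity)
    calc (φ t)^2 ≤ (t * φ' s)^2 := l4
      _ = B * (s * φ' s) := l5
      _ ≤ B * ((2:ℝ)^q * ((4:ℝ)^q * A)) := l6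
      _ = (8:ℝ)^q * A * B := by rw [e8]; ring
  -- conclude via AM-GM
  have hR : 0 ≤ κ * A + κ⁻¹ * B :=
    add_nonneg (mul_nonneg hκ.le hA0) (mul_nonneg (inv_nonneg.2 hκ.le) hB0)
  have hRB : κ * A + κ⁻¹ * (φ' s / s) * t^2 = κ * A + κ⁻¹ * B := by rw [hB]; ring
  rw [hRB]
  have hK : (1:ℝ) ≤ (8:ℝ)^q := by
    calc (1:ℝ) = (8:ℝ)^(0:ℝ) := by rw [Real.rpow_zero]
    _ ≤ _ := Real.rpow_le_rpow_of_exponent_le (by norm_num) (by linarith)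
  have hκκ : κ * κ⁻¹ = 1 := mul_inv_cancel₀ (ne_of_gt hκ)
  have hφt : 0 ≤ φ t := hnn t ht0
  set K := (8:ℝ)^q with hKdef
  have hKpos : 0 < K := Real.rpow_pos_of_pos (by norm_num) q
  set R := κ * A + κ⁻¹ * B with hRdef
  have hR0 : 0 ≤ R := hR
  have hprod : κ * A * (κ⁻¹ * B) = A * B := by
    have h : κ * A * (κ⁻¹ * B) = (κ * κ⁻¹) * (A * B) := by ring
    rw [h, hκκ, one_mul]
  have hsq : 4 * (A * B) ≤ R ^ 2 := by
    calc 4 * (A * B) = 4 * (κ * A * (κ⁻¹ * B)) := by rw [hprod]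
      _ ≤ (κ * A - κ⁻¹ * B) ^ 2 + 4 * (κ * A * (κ⁻¹ * B)) := by
          linarith [sq_nonneg (κ * A - κ⁻¹ * B)]
      _ = R ^ 2 := by rw [hRdef]; ring
  have h1 : (φ t) ^ 2 ≤ K * R ^ 2 / 4 := by
    calc (φ t) ^ 2 ≤ K * A * B := hkey
      _ = K / 4 * (4 * (A * B)) := by ring
      _ ≤ K / 4 * R ^ 2 := mul_le_mul_of_nonneg_left hsq (by linarith)
      _ = K * R ^ 2 / 4 := by ring
  show φ t ≤ K * R
  clear hkey hsq hprod tan f1 f2 f3 f4 f5 f6 hd hc hnn hdec hB hA hRB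
  clear_value s A B K R
  by_contra hcon
  push_neg at hcon
  have hKR0 : 0 ≤ K * R := mul_nonneg hKpos.le hR0
  have h2 : (K * R) ^ 2 < (φ t) ^ 2 :=
    pow_lt_pow_left₀ hcon hKR0 (by norm_num)
  have h3 : K ≤ 4 * K ^ 2 := by nlinarith [hK, hKpos.le]
  have h4 := mul_le_mul_of_nonneg_right h3 (show (0:ℝ) ≤ R ^ 2 / 4 by positivity)
  linarith [h1, h2, h4]

theorem stmt5 (p q : ℝ) (hp : 1 < p) (hpq : p ≤ q) :
    ∃ C : ℝ, 0 < C ∧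
      ∀ (N : ℕ) (φ φ' : ℝ → ℝ),
        (∀ t : ℝ, HasDerivAt φ (φ' t) t) →
        φ 0 = 0 →
        ConvexOn ℝ (Set.Ici 0) φ →
        (∀ t : ℝ, 0 ≤ t → 0 ≤ φ t) →
        (∀ s t : ℝ, 0 < s → s ≤ t → φ' s / s ^ (p - 1) ≤ φ' t / t ^ (p - 1)) →
        (∀ s t : ℝ, 0 < s → s ≤ t → φ' t / t ^ (q - 1) ≤ φ' s / s ^ (q - 1)) →
        ∀ κ : ℝ, 0 < κ → ∀ x y : EuclideanSpace ℝ (Fin N),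
          φ ‖x - y‖ ≤ C * (κ * (φ ‖x‖ + φ ‖y‖) +
            κ⁻¹ * (φ' (‖x‖ + ‖y‖) / (‖x‖ + ‖y‖)) * ‖x - y‖ ^ 2) := by
  have hq1 : 1 < q := lt_of_lt_of_le hp hpq
  refine ⟨(8:ℝ) ^ q, Real.rpow_pos_of_pos (by norm_num) q, ?_⟩
  intro N φ φ' hd h0 hc hnn _hinc hdec κ hκ x y
  exact stmt5_real q hq1 φ φ' hd h0 hc hnn hdec κ hκ ‖x‖ ‖y‖ ‖x - y‖
    (norm_nonneg x) (norm_nonneg y) (norm_nonneg _) (norm_sub_le x y)
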